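/- Let (V; f, g) be a dual-modular instance and for nonempty S ⊆ V define the density ρ(S) = f(S)/g(S). If A and B are both densest subsets (nonempty subsets maximizing ρ over all nonempty subsets of V), then A ∪ B is a densest subset, and if A ∩ B ≠ ∅ then A ∩ B is also a densest subset. -/

import Mathlib

open Finset

variable {V : Type*} [Fintype V] [DecidableEq V]

/-- A set function is supermodular. -/
def Supermodular (f : Finset V → ℝ) : Prop :=
  ∀ A B : Finset V, f A + f B ≤ f (A ∩ B) + f (A ∪ B)

/-- A set function is submodular. -/
def Submodular (g : Finset V → ℝ) : Prop :=
  ∀ A B : Finset V, g (A ∩ B) + g (A ∪ B) ≤ g A + g B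

/-- A set function is monotone. -/
def MonotoneFn (f : Finset V → ℝ) : Prop :=
  ∀ A B : Finset V, A ⊆ B → f A ≤ f B

/-- A set function is strictly monotone. -/
def StrictMonoFn (g : Finset V → ℝ) : Prop :=
  ∀ A B : Finset V, A ⊂ B → g A < g B

/-- A dual-modular instance `(V; f, g)`: `f` is a nonnegative monotone supermodular
reward function, `g` is a nonnegative strictly monotone submodular cost function,
both vanishing on the empty set. -/
structure DualModular (f g : Finset V → ℝ) : Prop where
  f_nonneg : ∀ A, 0 ≤ f A
  g_nonneg : ∀ A, 0 ≤ g A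
  f_empty : f ∅ = 0
  g_empty : g ∅ = 0
  f_mono : MonotoneFn f
  g_strictMono : StrictMonoFn g
  f_supermodular : Supermodular f
  g_submodular : Submodular g

/-- Density of a subset. -/
noncomputable def density (f g : Finset V → ℝ) (S : Finset V) : ℝ := f S / g S

/-- Marginal contribution `h(S|A) = h(S ∪ A) - h(A)`. -/
def marginal (h : Finset V → ℝ) (S A : Finset V) : ℝ := h (S ∪ A) - h A

/-- Marginal density `ρ(S|A) = f(S|A)/g(S|A)`. -/
noncomputable def margDensity (f g : Finset V → ℝ) (S A : Finset V) : ℝ :=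
  marginal f S A / marginal g S A

/-- `S_{<i}`: the union of earlier parts in an indexed family. -/
def below {k : ℕ} (S : Fin k → Finset V) (i : Fin k) : Finset V :=
  (Finset.univ.filter (fun j => j < i)).biUnion S

/-- The density decomposition `V = S₁ ∪ … ∪ S_k`: each `S i` is a nonempty maximal
densest subset of the remaining instance with marginal functions. -/
structure IsDensityDecomposition (f g : Finset V → ℝ) {k : ℕ} (S : Fin k → Finset V) :
    Prop where
  nonempty : ∀ i, (S i).Nonempty
  disj : ∀ i, Disjoint (S i) (below S i)
  cover : Finset.univ.biUnion S = (Finset.univ : Finset V)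
  maxDensity : ∀ i, ∀ T : Finset V, T.Nonempty → Disjoint T (below S i) →
    margDensity f g T (below S i) ≤ margDensity f g (S i) (below S i)
  maximal : ∀ i, ∀ T : Finset V, T.Nonempty → Disjoint T (below S i) →
    margDensity f g (S i) (below S i) ≤ margDensity f g T (below S i) → T ⊆ S i

/-- `ρ_i`, the density of the `i`-th component of the decomposition. -/
noncomputable def decompDensity (f g : Finset V → ℝ) {k : ℕ} (S : Fin k → Finset V)
    (i : Fin k) : ℝ :=
  margDensity f g (S i) (below S i)

/-- Membership in the base contrapolymatroid `B≥_f`. -/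
def memBf (f : Finset V → ℝ) (x : V → ℝ) : Prop :=
  (∀ v, 0 ≤ x v) ∧ (∑ v, x v = f Finset.univ) ∧ ∀ A : Finset V, f A ≤ ∑ v ∈ A, x v

/-- Membership in the base polymatroid `B≤_g`. -/
def memBg (g : Finset V → ℝ) (y : V → ℝ) : Prop :=
  (∀ v, 0 ≤ y v) ∧ (∑ v, y v = g Finset.univ) ∧ ∀ A : Finset V, ∑ v ∈ A, y v ≤ g A

/-- An allocation is a pair `(x, y) ∈ B≥_f × B≤_g`. -/
def Allocation (f g : Finset V → ℝ) (x y : V → ℝ) : Prop := memBf f x ∧ memBg g y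

/-- The locally maximin condition for an allocation. -/
def LocallyMaximin (f g : Finset V → ℝ) (x y : V → ℝ) : Prop :=
  ∀ ρ : ℝ, 0 < ρ →
    (∑ v ∈ Finset.univ.filter (fun v => ρ ≤ x v / y v), x v
       = f (Finset.univ.filter (fun v => ρ ≤ x v / y v))) ∧
    (∑ v ∈ Finset.univ.filter (fun v => ρ ≤ x v / y v), y v
       = g (Finset.univ.filter (fun v => ρ ≤ x v / y v)))

/-- The multiset of induced densities, sorted in non-increasing order. -/
noncomputable def sortedDensities (x y : V → ℝ) : List ℝ :=
  ((Finset.univ.val.map (fun v => x v / y v)).sort (· ≤ ·)).reverse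

/-- An allocation is lexicographically optimal if its non-increasingly sorted density
vector is lexicographically minimal among all allocations. -/
def LexOptimal (f g : Finset V → ℝ) (x y : V → ℝ) : Prop :=
  Allocation f g x y ∧
  ∀ x' y' : V → ℝ, Allocation f g x' y' → sortedDensities x y ≤ sortedDensities x' y'

/-- The hockey-stick divergence `HS_γ(x ‖ y)`. -/
noncomputable def HS (γ : ℝ) (x y : V → ℝ) : ℝ := ∑ u, max (x u - γ * y u) 0

/-- The `θ`-divergence `D_θ(x ‖ y) = Σ_u y_u · θ(x_u / y_u)`. -/
noncomputable def Dtheta (θ : ℝ → ℝ) (x y : V → ℝ) : ℝ := ∑ u, y u * θ (x u / y u)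

/-- Permutations of `V`, encoded as bijections to positions `Fin |V|`;
`u ≺_σ v` iff `σ u < σ v`. -/
abbrev Perms (V : Type*) [Fintype V] := V ≃ Fin (Fintype.card V)

/-- `h^σ(u)`: the marginal contribution of `u` given the elements preceding it in `σ`. -/
def permVal (h : Finset V → ℝ) (σ : Perms V) (u : V) : ℝ :=
  h (insert u (Finset.univ.filter (fun w => σ w < σ u))) -
    h (Finset.univ.filter (fun w => σ w < σ u))

/-- A probability distribution on permutations of `V`. -/
def IsDist (p : Perms V → ℝ) : Prop := (∀ σ, 0 ≤ p σ) ∧ ∑ σ, p σ = 1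

/-- `h^p(u) = Σ_σ p_σ · h^σ(u)`. -/
noncomputable def distVal (h : Finset V → ℝ) (p : Perms V → ℝ) (u : V) : ℝ :=
  ∑ σ, p σ * permVal h σ u

/-- The density induced by a solution `(p, q)`. -/
noncomputable def solDensity (f g : Finset V → ℝ) (p q : Perms V → ℝ) (v : V) : ℝ :=
  distVal f p v / distVal g q v

/-- A solution `(p, q)` is locally maximin if whenever `u` has strictly larger induced
density than `v`, every permutation with positive weight puts `u` before `v`. -/
def LocallyMaximinSol (f g : Finset V → ℝ) (p q : Perms V → ℝ) : Prop :=
  ∀ u v : V, solDensity f g p q v < solDensity f g p q u →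
    ∀ σ : Perms V, (0 < p σ ∨ 0 < q σ) → σ u < σ v

/-- The convex-program objective `Φ_θ(p, q) = D_θ(f^p ‖ g^q)`. -/
noncomputable def Phi (θ : ℝ → ℝ) (f g : Finset V → ℝ) (p q : Perms V → ℝ) : ℝ :=
  Dtheta θ (distVal f p) (distVal g q)

/-- if `A` and `B` are both densest subsets, then `A ∪ B` is densest,
and if `A ∩ B ≠ ∅` then `A ∩ B` is densest. -/
theorem densest_union_inter (f g : Finset V → ℝ) (hdm : DualModular f g)
    (A B : Finset V) (hA : A.Nonempty) (hB : B.Nonempty)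
    (hAmax : ∀ S : Finset V, S.Nonempty → density f g S ≤ density f g A)
    (hBmax : ∀ S : Finset V, S.Nonempty → density f g S ≤ density f g B) :
    (∀ S : Finset V, S.Nonempty → density f g S ≤ density f g (A ∪ B)) ∧
    ((A ∩ B).Nonempty →
      ∀ S : Finset V, S.Nonempty → density f g S ≤ density f g (A ∩ B)) := by
  have gpos : ∀ S : Finset V, S.Nonempty → 0 < g S := by
    intro S hS
    have := hdm.g_strictMono ∅ S (Finset.empty_ssubset.mpr hS)
    rw [hdm.g_empty] at this; exact this
  set ρ : ℝ := f A / g A with hρ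
  have hgA := gpos A hA
  have hgB := gpos B hB
  have hgU := gpos (A ∪ B) (hA.mono Finset.subset_union_left)
  have hfA : f A = ρ * g A := by rw [hρ, div_mul_cancel₀ _ hgA.ne']
  have hρnn : 0 ≤ ρ := div_nonneg (hdm.f_nonneg A) hgA.le
  have hfB : f B = ρ * g B := by
    have h1 : f B / g B ≤ ρ := hAmax B hB
    have h2 : ρ ≤ f B / g B := hBmax A hA
    have : f B / g B = ρ := le_antisymm h1 h2
    field_simp at this; linarith
  have hle : ∀ S : Finset V, S.Nonempty → f S ≤ ρ * g S := by
    intro S hS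
    have h1 : f S / g S ≤ ρ := hAmax S hS
    have := gpos S hS
    calc f S = (f S / g S) * g S := by field_simp
    _ ≤ ρ * g S := by nlinarith
  have hfI : f (A ∩ B) ≤ ρ * g (A ∩ B) := by
    rcases (A ∩ B).eq_empty_or_nonempty with h | h
    · rw [h, hdm.f_empty, hdm.g_empty]; simp
    · exact hle _ h
  have hfU : f (A ∪ B) ≤ ρ * g (A ∪ B) := hle _ (hA.mono Finset.subset_union_left)
  have hsup := hdm.f_supermodular A B
  have hsub := hdm.g_submodular A B
  have hgsub : ρ * (g (A ∩ B) + g (A ∪ B)) ≤ ρ * (g A + g B) :=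
    mul_le_mul_of_nonneg_left hsub hρnn
  have hUeq : f (A ∪ B) = ρ * g (A ∪ B) := by nlinarith
  have hIeq : f (A ∩ B) = ρ * g (A ∩ B) := by nlinarith
  have hdU : density f g (A ∪ B) = ρ := by
    unfold density; rw [hUeq]; field_simp
  constructor
  · intro S hS; rw [hdU]; exact hAmax S hS
  · intro hI S hS
    have hgI := gpos _ hI
    have : density f g (A ∩ B) = ρ := by
      unfold density; rw [hIeq]; field_simp
    rw [this]; exact hAmax S hS
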